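/- Lemma 3.1(3): Let u : Ω → ℝ be Lipschitz and let φ be a test function. If ε₀ ∈ ℝ is regular for u, φ, then ∫_{S(u_{ε₀})} |∇φ(x)| dx = 0, the function ε ↦ 𝔉(u_ε) is differentiable at ε₀, and its derivative there equals ∫_{Ω ∖ S(u_{ε₀})} N(u_{ε₀})(x)·∇φ(x) dx + ∫_Ω H(x)φ(x) dx. -/

import Mathlib

open MeasureTheory
open scoped RealInnerProductSpace ENNReal

/-- The vector field `∇u + ε ∇φ + F⃗` (the a.e. gradient of `u_ε = u + ε φ`
shifted by `F⃗`). -/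
noncomputable def gradShift {m : ℕ} (u φ : EuclideanSpace ℝ (Fin m) → ℝ)
    (F : EuclideanSpace ℝ (Fin m) → EuclideanSpace ℝ (Fin m)) (ε : ℝ)
    (x : EuclideanSpace ℝ (Fin m)) : EuclideanSpace ℝ (Fin m) :=
  gradient u x + ε • gradient φ x + F x

/-- The generalized p-area functional `𝔉(u_ε)` of `u_ε = u + ε φ`. -/
noncomputable def pArea {m : ℕ} (Ω : Set (EuclideanSpace ℝ (Fin m)))
    (u φ : EuclideanSpace ℝ (Fin m) → ℝ)
    (F : EuclideanSpace ℝ (Fin m) → EuclideanSpace ℝ (Fin m))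
    (H : EuclideanSpace ℝ (Fin m) → ℝ) (ε : ℝ) : ℝ :=
  ∫ x in Ω, (‖gradShift u φ F ε x‖ + H x * (u x + ε * φ x))

/-- The singular set `S(u_ε) = {x ∈ Ω : ∇u_ε + F⃗ = 0}` of `u_ε = u + ε φ`. -/
def singSet {m : ℕ} (Ω : Set (EuclideanSpace ℝ (Fin m)))
    (u φ : EuclideanSpace ℝ (Fin m) → ℝ)
    (F : EuclideanSpace ℝ (Fin m) → EuclideanSpace ℝ (Fin m)) (ε : ℝ) :
    Set (EuclideanSpace ℝ (Fin m)) :=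
  {x ∈ Ω | gradShift u φ F ε x = 0}


lemma hasDerivAt_norm_affine {E : Type*} [NormedAddCommGroup E] [InnerProductSpace ℝ E]
    (c w : E) (hc : c ≠ 0) (ε₀ : ℝ) :
    HasDerivAt (fun ε : ℝ => ‖c + (ε - ε₀) • w‖) ⟪‖c‖⁻¹ • c, w⟫ ε₀ := by
  set q : ℝ → ℝ := fun ε => ‖c‖^2 + 2*⟪c,w⟫*(ε-ε₀) + ‖w‖^2*(ε-ε₀)^2 with hqdef
  have h1 : HasDerivAt (fun ε : ℝ => ε - ε₀) 1 ε₀ := (hasDerivAt_id ε₀).sub_const ε₀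
  have hq : HasDerivAt q (2*⟪c,w⟫) ε₀ := by
    have h2 := (h1.pow 2).const_mul (‖w‖^2)
    have h3 := (h1.const_mul (2*⟪c,w⟫)).const_add (‖c‖^2)
    have h4 := h3.add h2
    convert h4 using 1
    · rfl
    · rfl
    · rfl
    · simp
  have hsq : ∀ ε : ℝ, ‖c + (ε-ε₀) • w‖ = Real.sqrt (q ε) := by
    intro ε
    have : q ε = ‖c + (ε-ε₀)•w‖^2 := by
      rw [← real_inner_self_eq_norm_sq, real_inner_add_add_self]
      simp only [real_inner_smul_left, real_inner_smul_right, hqdef,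
        ← real_inner_self_eq_norm_sq]
      ring
    rw [this, Real.sqrt_sq (norm_nonneg _)]
  have hne : q ε₀ ≠ 0 := by
    simp only [hqdef, sub_self, mul_zero, add_zero]
    simpa using hc
  have hd := (Real.hasDerivAt_sqrt hne).comp ε₀ hq
  have hfun : (fun ε : ℝ => ‖c + (ε - ε₀) • w‖) = (Real.sqrt ∘ q) := funext hsq
  rw [hfun]
  convert hd using 1
  · rfl
  · rfl
  have hq0 : q ε₀ = ‖c‖^2 := by simp [hqdef]
  rw [hq0, Real.sqrt_sq (norm_nonneg _), real_inner_smul_left]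
  field_simp

set_option maxHeartbeats 2000000 in
/-- **Lemma 3.1(3)**: at a regular value `ε₀` one has `∫_{S(u_{ε₀})} |∇φ| = 0`, the
function `ε ↦ 𝔉(u_ε)` is differentiable at `ε₀`, and its derivative there equals
`∫_{Ω ∖ S(u_{ε₀})} N(u_{ε₀})·∇φ + ∫_Ω H φ`. -/
theorem hasDerivAt_pArea_of_regular {m : ℕ} (hm : 1 ≤ m)
    (Ω : Set (EuclideanSpace ℝ (Fin m)))
    (hΩopen : IsOpen Ω) (hΩbdd : Bornology.IsBounded Ω)
    (hΩne : Ω.Nonempty) (hΩconn : IsConnected Ω)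
    (F : EuclideanSpace ℝ (Fin m) → EuclideanSpace ℝ (Fin m))
    (hF : IntegrableOn F Ω volume)
    (H : EuclideanSpace ℝ (Fin m) → ℝ)
    (hH : MemLp H ⊤ (volume.restrict Ω))
    (u : EuclideanSpace ℝ (Fin m) → ℝ) (hu : ∃ K, LipschitzOnWith K u Ω)
    (φ : EuclideanSpace ℝ (Fin m) → ℝ) (hφ : ∃ K, LipschitzWith K φ)
    (hφsupp : HasCompactSupport φ) (hφΩ : tsupport φ ⊆ Ω)
    (ε₀ : ℝ)
    (hreg : volume (singSet Ω u φ F ε₀ ∩ {x | gradient φ x ≠ 0}) = 0) :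
    (∫ x in singSet Ω u φ F ε₀, ‖gradient φ x‖) = 0 ∧
    HasDerivAt (fun ε : ℝ => pArea Ω u φ F H ε)
      ((∫ x in Ω \ singSet Ω u φ F ε₀,
          ⟪‖gradShift u φ F ε₀ x‖⁻¹ • gradShift u φ F ε₀ x, gradient φ x⟫) +
        ∫ x in Ω, H x * φ x) ε₀ := by
  obtain ⟨K, hK⟩ := hu
  obtain ⟨Kφ, hKφ⟩ := hφ
  set w := fun x : EuclideanSpace ℝ (Fin m) => gradient φ x with hwdef
  set c := fun x => gradShift u φ F ε₀ x with hcdef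
  set S := singSet Ω u φ F ε₀ with hSdef
  set μ := volume.restrict Ω with hμdef
  have hΩm : MeasurableSet Ω := hΩopen.measurableSet
  haveI : IsFiniteMeasure μ := ⟨by
    rw [hμdef, Measure.restrict_apply_univ]; exact hΩbdd.measure_lt_top⟩
  -- measurability of gradients
  have hgradmeas : ∀ ψ : EuclideanSpace ℝ (Fin m) → ℝ, Measurable (fun x => gradient ψ x) := by
    intro ψ
    exact (InnerProductSpace.toDual ℝ (EuclideanSpace ℝ (Fin m))).symm.continuous.measurable.comp
      (measurable_fderiv ℝ ψ)
  have hwmeas : Measurable w := hgradmeas φ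
  have hgumeas : Measurable (fun x => gradient u x) := hgradmeas u
  have hcmeas : AEStronglyMeasurable c μ := by
    have : AEStronglyMeasurable (fun x => gradient u x + ε₀ • w x) μ :=
      (hgumeas.add (hwmeas.const_smul ε₀)).aestronglyMeasurable
    exact this.add hF.aestronglyMeasurable
  -- norm of gradient = norm of fderiv
  have hgradnorm : ∀ (ψ : EuclideanSpace ℝ (Fin m) → ℝ) x, ‖gradient ψ x‖ = ‖fderiv ℝ ψ x‖ := by
    intro ψ x
    exact LinearIsometryEquiv.norm_map _ _
  -- bounds
  have hwbdd : ∀ x, ‖w x‖ ≤ Kφ := by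
    intro x
    rw [hwdef, hgradnorm]
    exact norm_fderiv_le_of_lipschitz ℝ hKφ
  have hgubdd : ∀ x ∈ Ω, ‖gradient u x‖ ≤ K := by
    intro x hx
    rw [hgradnorm]
    exact norm_fderiv_le_of_lipschitzOn ℝ (hΩopen.mem_nhds hx) hK
  obtain ⟨Cφ, hCφ⟩ := hφsupp.exists_bound_of_continuous hKφ.continuous
  have hCφ0 : 0 ≤ Cφ := le_trans (norm_nonneg _) (hCφ 0)
  -- u is bounded on Ω
  obtain ⟨x₀, hx₀⟩ := hΩne
  obtain ⟨r, hr⟩ := hΩbdd.subset_closedBall x₀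
  have hubdd : ∀ x ∈ Ω, ‖u x‖ ≤ ‖u x₀‖ + K * r := by
    intro x hx
    have h1 : dist (u x) (u x₀) ≤ K * dist x x₀ := hK.dist_le_mul x hx x₀ hx₀
    have h2 : dist x x₀ ≤ r := hr hx
    have h3 : (K : ℝ) * dist x x₀ ≤ K * r := by
      exact mul_le_mul_of_nonneg_left h2 K.coe_nonneg
    calc ‖u x‖ = dist (u x) 0 := by simp [Real.dist_eq, Real.norm_eq_abs]
      _ ≤ dist (u x) (u x₀) + dist (u x₀) 0 := dist_triangle _ _ _
      _ ≤ ↑K * r + ‖u x₀‖ := by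
          gcongr
          · exact h1.trans h3
          · simp [Real.dist_eq, Real.norm_eq_abs]
      _ = ‖u x₀‖ + ↑K * r := by ring
  set Cu : ℝ := ‖u x₀‖ + K * r with hCudef
  -- H bound
  set CH : ℝ := (eLpNormEssSup H μ).toReal with hCHdef
  have hHtop : eLpNormEssSup H μ ≠ ∞ := by
    have := hH.2
    rwa [eLpNorm_exponent_top, lt_top_iff_ne_top] at this
  have hHbdd : ∀ᵐ x ∂μ, ‖H x‖ ≤ CH := by
    filter_upwards [ae_le_eLpNormEssSup (f := H) (μ := μ)] with x hx
    have := ENNReal.toReal_mono hHtop hx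
    simpa using this
  have hCH0 : 0 ≤ CH := ENNReal.toReal_nonneg
  -- a.e. membership in Ω
  have haeΩ : ∀ᵐ x ∂μ, x ∈ Ω := ae_restrict_mem hΩm
  -- the parametrized integrand
  set B := fun (ε : ℝ) x => ‖gradShift u φ F ε x‖ + H x * (u x + ε * φ x) with hBdef
  have hGS : ∀ (ε : ℝ) x, gradShift u φ F ε x = c x + (ε - ε₀) • w x := by
    intro ε x
    simp only [hcdef, hwdef, gradShift]
    module
  -- Part 1
  have part1 : (∫ x in S, ‖gradient φ x‖) = 0 := by
    have hmeas : MeasurableSet {x : EuclideanSpace ℝ (Fin m) | gradient φ x ≠ 0} :=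
      (hwmeas (measurableSet_singleton 0)).compl
    have h0 : (volume.restrict S) {x : EuclideanSpace ℝ (Fin m) | gradient φ x ≠ 0} = 0 := by
      rw [Measure.restrict_apply hmeas, Set.inter_comm]
      exact hreg
    have hz : ∀ᵐ x ∂(volume.restrict S), gradient φ x = 0 := by
      rw [ae_iff]
      exact h0
    calc (∫ x in S, ‖gradient φ x‖) = ∫ _x in S, (0:ℝ) :=
        integral_congr_ae (hz.mono fun x hx => by simp [hx])
      _ = 0 := integral_zero _ _
  refine ⟨part1, ?_⟩
  -- derivative integrand
  set B' := fun x => ⟪‖c x‖⁻¹ • c x, w x⟫ + H x * φ x with hB'def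
  have hB'eq : B' = fun x => ‖c x‖⁻¹ * ⟪c x, w x⟫ + H x * φ x := by
    funext x; simp only [hB'def, real_inner_smul_left]
  -- a.e. measurability pieces
  have hφc : Continuous φ := hKφ.continuous
  have huaesm : AEStronglyMeasurable u μ := (hK.continuousOn).aestronglyMeasurable hΩm
  have hHaesm : AEStronglyMeasurable H μ := hH.1
  have hinner : AEStronglyMeasurable
      (fun x => ⟪‖c x‖⁻¹ • c x, w x⟫ : EuclideanSpace ℝ (Fin m) → ℝ) μ := by
    have h1 : AEMeasurable (fun x => ‖c x‖⁻¹) μ := hcmeas.norm.aemeasurable.inv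
    have h2 : AEStronglyMeasurable (fun x => (⟪c x, w x⟫ : ℝ)) μ :=
      hcmeas.inner hwmeas.aestronglyMeasurable
    have := (h1.mul h2.aemeasurable).aestronglyMeasurable
    refine this.congr ?_
    filter_upwards with x
    exact (real_inner_smul_left _ _ _).symm
  have hB'meas : AEStronglyMeasurable B' μ :=
    hinner.add (hHaesm.mul hφc.aestronglyMeasurable)
  -- measurability of B ε
  have hBmeas : ∀ ε : ℝ, AEStronglyMeasurable (B ε) μ := by
    intro ε
    have h1 : AEStronglyMeasurable (fun x => gradShift u φ F ε x) μ := by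
      have : AEStronglyMeasurable (fun x => gradient u x + ε • w x) μ :=
        (hgumeas.add (hwmeas.const_smul ε)).aestronglyMeasurable
      exact this.add hF.aestronglyMeasurable
    exact h1.norm.add (hHaesm.mul
      ((huaesm.add (aestronglyMeasurable_const.mul hφc.aestronglyMeasurable))))
  -- integrability of B ε₀
  have hBint : Integrable (B ε₀) μ := by
    refine Integrable.mono' ((hF.norm.add (integrable_const
      (K + |ε₀| * Kφ + CH * (Cu + |ε₀| * Cφ)))) : Integrable _ μ) (hBmeas ε₀) ?_
    filter_upwards [haeΩ, hHbdd] with x hxΩ hxH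
    rw [hBdef]
    simp only [Real.norm_eq_abs, Pi.add_apply]
    have h1 : ‖gradShift u φ F ε₀ x‖ ≤ ‖F x‖ + (K + |ε₀| * Kφ) := by
      rw [gradShift]
      calc ‖gradient u x + ε₀ • gradient φ x + F x‖
          ≤ ‖gradient u x + ε₀ • gradient φ x‖ + ‖F x‖ := norm_add_le _ _
        _ ≤ (‖gradient u x‖ + ‖ε₀ • gradient φ x‖) + ‖F x‖ := by
            gcongr; exact norm_add_le _ _
        _ ≤ (K + |ε₀| * Kφ) + ‖F x‖ := by
            have e1 : ‖gradient u x‖ ≤ (K:ℝ) := hgubdd x hxΩ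
            have e2 : ‖ε₀ • gradient φ x‖ ≤ |ε₀| * Kφ := by
              rw [norm_smul, Real.norm_eq_abs]
              exact mul_le_mul_of_nonneg_left (hwbdd x) (abs_nonneg _)
            gcongr
        _ = ‖F x‖ + (K + |ε₀| * Kφ) := by ring
    have h2 : |H x * (u x + ε₀ * φ x)| ≤ CH * (Cu + |ε₀| * Cφ) := by
      rw [abs_mul]
      have hmid : |u x + ε₀ * φ x| ≤ Cu + |ε₀| * Cφ := by
        calc |u x + ε₀ * φ x| ≤ |u x| + |ε₀ * φ x| := abs_add_le _ _
          _ ≤ Cu + |ε₀| * Cφ := by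
              rw [abs_mul]
              have e1 : |u x| ≤ Cu := by rw [← Real.norm_eq_abs]; exact hubdd x hxΩ
              have e2 : |φ x| ≤ Cφ := by rw [← Real.norm_eq_abs]; exact hCφ x
              exact add_le_add e1 (mul_le_mul_of_nonneg_left e2 (abs_nonneg _))
      have hHx : |H x| ≤ CH := by rw [← Real.norm_eq_abs]; exact hxH
      exact mul_le_mul hHx hmid (abs_nonneg _) hCH0
    calc |‖gradShift u φ F ε₀ x‖ + H x * (u x + ε₀ * φ x)|
        ≤ |‖gradShift u φ F ε₀ x‖| + |H x * (u x + ε₀ * φ x)| := abs_add_le _ _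
      _ = ‖gradShift u φ F ε₀ x‖ + |H x * (u x + ε₀ * φ x)| := by
          rw [abs_of_nonneg (norm_nonneg _)]
      _ ≤ (‖F x‖ + (K + |ε₀| * Kφ)) + CH * (Cu + |ε₀| * Cφ) := by gcongr
      _ = ‖F x‖ + (↑K + |ε₀| * ↑Kφ + CH * (Cu + |ε₀| * Cφ)) := by ring
  -- Lipschitz bound
  set bnd : ℝ := ↑Kφ + CH * Cφ with hbnddef
  have hlip : ∀ᵐ x ∂μ, LipschitzOnWith (Real.nnabs bnd) (fun ε => B ε x) (Metric.ball ε₀ 1) := by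
    filter_upwards [hHbdd] with x hxH
    refine LipschitzWith.lipschitzOnWith ?_
    refine LipschitzWith.of_dist_le_mul fun s t => ?_
    rw [Real.coe_nnabs, Real.dist_eq, Real.dist_eq]
    have key : B s x - B t x
        = (‖c x + (s - ε₀) • w x‖ - ‖c x + (t - ε₀) • w x‖) + H x * φ x * (s - t) := by
      simp only [hBdef, hGS]
      ring
    calc |B s x - B t x|
        ≤ |‖c x + (s - ε₀) • w x‖ - ‖c x + (t - ε₀) • w x‖| + |H x * φ x * (s - t)| := by
          rw [key]; exact abs_add_le _ _
      _ ≤ ‖(s - t) • w x‖ + |H x * φ x| * |s - t| := by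
          gcongr
          · have := abs_norm_sub_norm_le (c x + (s - ε₀) • w x) (c x + (t - ε₀) • w x)
            refine this.trans (le_of_eq ?_)
            congr 1
            module
          · rw [abs_mul]
      _ ≤ Kφ * |s - t| + (CH * Cφ) * |s - t| := by
          rw [norm_smul, Real.norm_eq_abs]
          have h1 : |H x| ≤ CH := by rwa [← Real.norm_eq_abs]
          have h2 : |φ x| ≤ Cφ := by rw [← Real.norm_eq_abs]; exact hCφ x
          have e1 : |s - t| * ‖w x‖ ≤ ↑Kφ * |s - t| := by
            rw [mul_comm]
            exact mul_le_mul_of_nonneg_right (hwbdd x) (abs_nonneg _)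
          have e2 : |H x * φ x| * |s - t| ≤ (CH * Cφ) * |s - t| := by
            refine mul_le_mul_of_nonneg_right ?_ (abs_nonneg _)
            rw [abs_mul]
            exact mul_le_mul h1 h2 (abs_nonneg _) hCH0
          exact add_le_add e1 e2
      _ = bnd * |s - t| := by rw [hbnddef]; ring
      _ ≤ |bnd| * |s - t| := by gcongr; exact le_abs_self _
  have hbndint : Integrable (fun _ : EuclideanSpace ℝ (Fin m) => bnd) μ := integrable_const _
  -- a.e. differentiability
  have hae_good : ∀ᵐ x ∂μ, c x ≠ 0 ∨ w x = 0 := by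
    rw [ae_iff]
    have hset : {x : EuclideanSpace ℝ (Fin m) | ¬(c x ≠ 0 ∨ w x = 0)} = {x | c x = 0 ∧ w x ≠ 0} := by
      ext x; simp [not_or]
    rw [hset, hμdef, Measure.restrict_apply' hΩm]
    have : {x : EuclideanSpace ℝ (Fin m) | c x = 0 ∧ w x ≠ 0} ∩ Ω = S ∩ {x | gradient φ x ≠ 0} := by
      ext x
      simp only [hSdef, singSet, Set.mem_inter_iff, Set.mem_setOf_eq, Set.mem_sep_iff, hcdef,
        hwdef]
      tauto
    rw [this]
    exact hreg
  have hdiff : ∀ᵐ x ∂μ, HasDerivAt (fun ε => B ε x) (B' x) ε₀ := by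
    filter_upwards [hae_good] with x hx
    have hlin : HasDerivAt (fun ε : ℝ => H x * (u x + ε * φ x)) (H x * φ x) ε₀ := by
      have : HasDerivAt (fun ε : ℝ => u x + ε * φ x) (φ x) ε₀ := by
        simpa using (hasDerivAt_id ε₀).mul_const (φ x) |>.const_add (u x)
      simpa using this.const_mul (H x)
    have hBx : (fun ε => B ε x) = fun ε => ‖c x + (ε - ε₀) • w x‖ + H x * (u x + ε * φ x) := by
      funext ε; simp only [hBdef, hGS]
    rw [hBx]
    rcases hx with hc0 | hw0
    · exact (hasDerivAt_norm_affine (c x) (w x) hc0 ε₀).add hlin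
    · have hfun2 : (fun ε : ℝ => ‖c x + (ε - ε₀) • w x‖ + H x * (u x + ε * φ x))
          = fun ε : ℝ => ‖c x‖ + H x * (u x + ε * φ x) := by
        funext ε; rw [hw0]; simp
      rw [hfun2]
      have hB'x : B' x = H x * φ x := by
        simp only [hB'def]
        rw [hw0]
        simp
      rw [hB'x]
      simpa using hlin.const_add ‖c x‖
  -- apply dominated differentiation
  have main := (hasDerivAt_integral_of_dominated_loc_of_lip (F := B) (F' := B')
    (bound := fun _ => bnd) (μ := μ) (x₀ := ε₀) (Metric.ball_mem_nhds ε₀ one_pos)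
    (Filter.Eventually.of_forall hBmeas) hBint hB'meas hlip hbndint hdiff).2
  -- rewrite the value of the derivative
  have hintinner : Integrable (fun x => (⟪‖c x‖⁻¹ • c x, w x⟫ : ℝ)) μ := by
    refine Integrable.mono' (integrable_const (Kφ : ℝ)) hinner ?_
    filter_upwards with x
    rw [Real.norm_eq_abs]
    calc |(⟪‖c x‖⁻¹ • c x, w x⟫ : ℝ)| ≤ ‖‖c x‖⁻¹ • c x‖ * ‖w x‖ := abs_real_inner_le_norm _ _
      _ ≤ 1 * Kφ := by
          refine mul_le_mul ?_ (hwbdd x) (norm_nonneg _) zero_le_one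
          rw [norm_smul, norm_inv, norm_norm]
          rcases eq_or_ne (c x) 0 with h | h
          · simp [h]
          · rw [inv_mul_cancel₀ (norm_ne_zero_iff.2 h)]
      _ = Kφ := one_mul _
  have hintHφ : Integrable (fun x => H x * φ x) μ := by
    refine Integrable.mono' (integrable_const (CH * Cφ)) (hHaesm.mul hφc.aestronglyMeasurable) ?_
    filter_upwards [hHbdd] with x hxH
    rw [Real.norm_eq_abs, abs_mul]
    exact mul_le_mul hxH (by rw [← Real.norm_eq_abs]; exact hCφ x) (abs_nonneg _) hCH0
  have hsplit : (∫ x, B' x ∂μ)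
      = (∫ x, (⟪‖c x‖⁻¹ • c x, w x⟫ : ℝ) ∂μ) + ∫ x, H x * φ x ∂μ := by
    rw [hB'def]
    exact integral_add hintinner hintHφ
  have hset2 : (∫ x in Ω \ S, (⟪‖c x‖⁻¹ • c x, w x⟫ : ℝ))
      = ∫ x, (⟪‖c x‖⁻¹ • c x, w x⟫ : ℝ) ∂μ := by
    have hΩS : Ω \ S = {x : EuclideanSpace ℝ (Fin m) | c x ≠ 0} ∩ Ω := by
      ext x
      simp only [hSdef, singSet, Set.mem_diff, Set.mem_sep_iff, Set.mem_inter_iff,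
        Set.mem_setOf_eq, hcdef]
      tauto
    rw [hΩS, ← Measure.restrict_restrict' hΩm]
    exact setIntegral_eq_integral_of_forall_compl_eq_zero fun x hx => by
      simp only [Set.mem_setOf_eq, not_not] at hx
      rw [hx]
      simp
  have hval : (∫ x, B' x ∂μ)
      = (∫ x in Ω \ S, (⟪‖c x‖⁻¹ • c x, w x⟫ : ℝ)) + ∫ x in Ω, H x * φ x := by
    rw [hsplit, hset2]
  have hfeq : (fun ε : ℝ => pArea Ω u φ F H ε) = fun ε => ∫ x, B ε x ∂μ := rfl
  rw [hfeq, ← hval]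
  exact main
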